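/- If A is a dense subring of B and P, Q are non-comparable prime ideals of B (neither contains the other), then P ∩ A and Q ∩ A are non-comparable prime ideals of A. -/
import Mathlib


def IsDenseSubring {B : Type*} [CommRing B] (A : Subring B) : Prop :=
  ∀ I : Ideal B, ∀ b ∉ I.radical, ∃ a ∉ I.radical, a * b ∈ A

lemma key_aux {B : Type*} [CommRing B] (A : Subring B) (hA : IsDenseSubring A)
    (P Q : Ideal B) (hQ : Q.IsPrime) (h1 : ¬ P ≤ Q) :
    ¬ P.comap A.subtype ≤ Q.comap A.subtype := by
  obtain ⟨b, hbP, hbQ⟩ := Set.not_subset.mp h1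
  have hbrad : b ∉ Q.radical := by rwa [hQ.radical]
  obtain ⟨a, haQ, hab⟩ := hA Q b hbrad
  rw [hQ.radical] at haQ
  intro hle
  have h1 : (⟨a * b, hab⟩ : A) ∈ P.comap A.subtype := by
    simpa [Ideal.mem_comap] using P.mul_mem_left a hbP
  have h2 := hle h1
  rw [Ideal.mem_comap] at h2
  exact (hQ.mul_mem_iff_mem_or_mem.mp h2).elim haQ hbQ

theorem stmt_6 {B : Type*} [CommRing B] (A : Subring B) (hA : IsDenseSubring A)
    (P Q : Ideal B) (hP : P.IsPrime) (hQ : Q.IsPrime)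
    (h1 : ¬ P ≤ Q) (h2 : ¬ Q ≤ P) :
    ¬ P.comap A.subtype ≤ Q.comap A.subtype ∧ ¬ Q.comap A.subtype ≤ P.comap A.subtype :=
  ⟨key_aux A hA P Q hQ h1, key_aux A hA Q P hP h2⟩
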